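/- For every ρ ∈ (0, 1/2), one has (1 − 2ρ)·log((1−ρ)/ρ) ≥ 4·(log 2 − H₂(ρ)). -/

import Mathlib

/-- Binary entropy function with natural logarithm. -/
noncomputable def binH (q : ℝ) : ℝ := -q * Real.log q - (1 - q) * Real.log (1 - q)

private lemma two_log_le {x : ℝ} (hx : 1 ≤ x) : 2 * Real.log x ≤ x - x⁻¹ := by
  have hx0 : (0:ℝ) < 1 := one_pos
  have key : MonotoneOn (fun z : ℝ => z - z⁻¹ - 2 * Real.log z) (Set.Ici 1) := by
    apply monotoneOn_of_deriv_nonneg (convex_Ici 1)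
    · intro z hz
      have hz0 : (0:ℝ) < z := lt_of_lt_of_le one_pos hz
      exact (((hasDerivAt_id z).sub (hasDerivAt_inv hz0.ne')).sub
        ((Real.hasDerivAt_log hz0.ne').const_mul 2)).differentiableAt.continuousAt.continuousWithinAt
    · intro z hz
      rw [interior_Ici] at hz
      have hz0 : (0:ℝ) < z := lt_trans one_pos hz
      exact (((hasDerivAt_id z).sub (hasDerivAt_inv hz0.ne')).sub
        ((Real.hasDerivAt_log hz0.ne').const_mul 2)).differentiableAt.differentiableWithinAt
    · intro z hz
      rw [interior_Ici] at hz
      have hz0 : (0:ℝ) < z := lt_trans one_pos hz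
      have hd := (((hasDerivAt_id z).sub (hasDerivAt_inv hz0.ne')).sub
        ((Real.hasDerivAt_log hz0.ne').const_mul 2)).deriv
      change deriv (fun z : ℝ => z - z⁻¹ - 2 * Real.log z) z = _ at hd
      rw [hd]
      have h3 : (z^2)⁻¹ = z⁻¹ * z⁻¹ := by rw [sq, mul_inv]
      rw [h3]
      nlinarith [sq_nonneg (1 - z⁻¹)]
  have h := key (Set.mem_Ici.mpr le_rfl) (Set.mem_Ici.mpr hx) hx
  simp only at h
  have : (1:ℝ) - 1⁻¹ - 2 * Real.log 1 = 0 := by simp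
  linarith [h, this]

private lemma hasDerivF {x : ℝ} (hx0 : 0 < x) (hx1 : x < 1) :
    HasDerivAt (fun y : ℝ => (1 - 2*y) * (Real.log (1-y) - Real.log y)
        + 4 * (-y * Real.log y - (1-y) * Real.log (1-y)))
      (2 * (Real.log (1-x) - Real.log x) - (1-2*x) * ((1-x)⁻¹ + x⁻¹)) x := by
  have h1x : (0:ℝ) < 1 - x := by linarith
  have ha : HasDerivAt (fun y : ℝ => 1 - 2*y) (-2) x := by
    simpa using ((hasDerivAt_id x).const_mul 2).const_sub 1
  have hb0 : HasDerivAt (fun y : ℝ => 1 - y) (-1) x := by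
    simpa using (hasDerivAt_id x).const_sub 1
  have hb : HasDerivAt (fun y : ℝ => Real.log (1-y)) ((1-x)⁻¹ * (-1)) x :=
    (Real.hasDerivAt_log h1x.ne').comp x hb0
  have hc : HasDerivAt Real.log x⁻¹ x := Real.hasDerivAt_log hx0.ne'
  have hid : HasDerivAt (fun y : ℝ => y) 1 x := hasDerivAt_id x
  have h1 := ha.mul (hb.sub hc)
  have h2 := (hid.neg).mul hc
  have h3 := hb0.mul hb
  have h := h1.add (((h2.sub h3).const_mul 4))
  refine h.congr_deriv ?_
  simp only [Pi.sub_apply, Pi.neg_apply]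
  have hx' : x ≠ 0 := hx0.ne'
  have h1x' : (1:ℝ) - x ≠ 0 := h1x.ne'
  field_simp
  ring

theorem gt_entropy_inequality (ρ : ℝ) (h0 : 0 < ρ) (h1 : ρ < 1 / 2) :
    (1 - 2 * ρ) * Real.log ((1 - ρ) / ρ) ≥ 4 * (Real.log 2 - binH ρ) := by
  set f : ℝ → ℝ := fun y => (1 - 2*y) * (Real.log (1-y) - Real.log y)
      + 4 * (-y * Real.log y - (1-y) * Real.log (1-y)) with hf
  have anti : AntitoneOn f (Set.Icc ρ (1/2)) := by
    apply antitoneOn_of_deriv_nonpos (convex_Icc _ _)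
    · intro x hx
      have hx0 : 0 < x := lt_of_lt_of_le h0 hx.1
      have hx1 : x < 1 := by have := hx.2; linarith
      exact (hasDerivF hx0 hx1).differentiableAt.continuousAt.continuousWithinAt
    · intro x hx
      rw [interior_Icc] at hx
      have hx0 : 0 < x := lt_trans h0 hx.1
      have hx1 : x < 1 := by have := hx.2; linarith
      exact (hasDerivF hx0 hx1).differentiableAt.differentiableWithinAt
    · intro x hx
      rw [interior_Icc] at hx
      have hx0 : 0 < x := lt_trans h0 hx.1
      have hx1 : x < 1 := by have := hx.2; linarith
      have h1x : (0:ℝ) < 1 - x := by linarith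
      rw [(hasDerivF hx0 hx1).deriv]
      -- key inequality: 2 log((1-x)/x) ≤ (1-x)/x - x/(1-x)
      have hxle : (1:ℝ) ≤ (1-x)/x := by
        rw [le_div_iff₀ hx0]; linarith [hx.2]
      have hkey := two_log_le hxle
      rw [Real.log_div h1x.ne' hx0.ne'] at hkey
      have heq : (1-x)/x - ((1-x)/x)⁻¹ = (1-2*x) * ((1-x)⁻¹ + x⁻¹) := by
        rw [inv_div]
        field_simp
        ring
      rw [heq] at hkey
      linarith
  have hmem1 : ρ ∈ Set.Icc ρ (1/2) := ⟨le_rfl, h1.le⟩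
  have hmem2 : (1/2 : ℝ) ∈ Set.Icc ρ (1/2) := ⟨h1.le, le_rfl⟩
  have hle := anti hmem1 hmem2 h1.le
  have hfhalf : f (1/2) = 4 * Real.log 2 := by
    rw [hf]
    norm_num
    rw [show Real.log (1/2) = - Real.log 2 by rw [one_div, Real.log_inv]]
    ring
  have hρ1 : (0:ℝ) < 1 - ρ := by linarith
  have hfρ : f ρ = (1 - 2*ρ) * Real.log ((1-ρ)/ρ) + 4 * binH ρ := by
    rw [hf, Real.log_div hρ1.ne' h0.ne', binH]
  rw [hfhalf, hfρ] at hle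
  linarith
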